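/- (Theorem 2.1, second identity, q-case; q-factorial moments of the q-binomial distribution of the first kind, giving the conditional moments of Y₂ given Y₁ = y₁ upon taking N = n − y₁ and α = α₂.) Let N ∈ ℕ, α ∈ (0,1) and let m be a natural number with m ≤ N. Then ∑_{y=0}^{N} [y]_{m,q} · C_q(N,y) · α^{y} · q^{b(y)} / ⟨1⊕α⟩_{N} = [N]_{m,q} · α^{m} · q^{b(m)} / ⟨1⊕α⟩_{m}. -/

import Mathlib

open Finset

/-- q-integer `[k]_q = (1 - q^k)/(1 - q)`. -/
noncomputable def qInt (q : ℝ) (k : ℤ) : ℝ := (1 - q ^ k) / (1 - q)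

/-- q-factorial `[n]_q! = ∏_{i=1}^n [i]_q`. -/
noncomputable def qFact (q : ℝ) (n : ℕ) : ℝ := ∏ i ∈ Finset.Icc 1 n, qInt q (i : ℤ)

/-- q-binomial coefficient `C_q(n,k)`. -/
noncomputable def qBinom (q : ℝ) (n k : ℕ) : ℝ := qFact q n / (qFact q k * qFact q (n - k))

/-- q-falling factorial `[u]_{m,q} = ∏_{i=1}^m [u-i+1]_q`. -/
noncomputable def qFall (q : ℝ) (u : ℤ) (m : ℕ) : ℝ := ∏ i ∈ Finset.Icc 1 m, qInt q (u - (i : ℤ) + 1)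

/-- `[k]_{q⁻¹} = q^{1-k} · [k]_q`. -/
noncomputable def qIntInv (q : ℝ) (k : ℤ) : ℝ := q ^ (1 - k) * qInt q k

/-- `[u]_{m,q⁻¹} = ∏_{i=1}^m [u-i+1]_{q⁻¹}`. -/
noncomputable def qFallInv (q : ℝ) (u : ℤ) (m : ℕ) : ℝ := ∏ i ∈ Finset.Icc 1 m, qIntInv q (u - (i : ℤ) + 1)

/-- `b(k) = k(k-1)/2`. -/
def bb (k : ℕ) : ℕ := k * (k - 1) / 2

/-- `⟨1 ⊕ α⟩_m = ∏_{i=1}^m (1 + α q^{i-1})`. -/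
noncomputable def oplus (q α : ℝ) (m : ℕ) : ℝ := ∏ i ∈ Finset.Icc 1 m, (1 + α * q ^ (i - 1))

/-- `⟨1 ⊖ β⟩_m = ∏_{i=1}^m (1 - β q^{i-1})`. -/
noncomputable def ominus (q β : ℝ) (m : ℕ) : ℝ := ∏ i ∈ Finset.Icc 1 m, (1 - β * q ^ (i - 1))

/-- q-trinomial coefficient `T_q(n; x₁, x₂)`. -/
noncomputable def qTri (q : ℝ) (n x1 x2 : ℕ) : ℝ :=
  qFact q n / (qFact q x1 * qFact q x2 * qFact q (n - x1 - x2))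

section Aux
variable {q : ℝ} (hq0 : 0 < q) (hq1 : q < 1)

lemma qInt_nat (k : ℕ) : qInt q (k : ℤ) = (1 - q ^ k) / (1 - q) := by
  simp [qInt, zpow_natCast]

include hq0 hq1 in
lemma qInt_pos {k : ℕ} (hk : 1 ≤ k) : 0 < qInt q (k : ℤ) := by
  rw [qInt_nat]
  have h1 : q ^ k < 1 := pow_lt_one₀ hq0.le hq1 (by omega)
  have h2 : (0:ℝ) < 1 - q := by linarith
  have h3 : (0:ℝ) < 1 - q ^ k := by linarith
  positivity

include hq1 in
lemma qInt_add (a b : ℕ) : qInt q ((a + b : ℕ) : ℤ) = qInt q a + q ^ a * qInt q b := by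
  have hq : (1:ℝ) - q ≠ 0 := by intro h; nlinarith
  rw [qInt_nat, qInt_nat, qInt_nat]
  field_simp
  ring

lemma qFact_zero : qFact q 0 = 1 := by simp [qFact]

lemma qFact_succ (n : ℕ) : qFact q (n + 1) = qFact q n * qInt q ((n + 1 : ℕ) : ℤ) := by
  rw [qFact, Finset.prod_Icc_succ_top (by omega)]; rfl

include hq0 hq1 in
lemma qFact_pos (n : ℕ) : 0 < qFact q n := by
  refine Finset.prod_pos fun i hi => qInt_pos hq0 hq1 ?_
  exact (Finset.mem_Icc.mp hi).1

include hq0 hq1 in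
lemma qBinom_zero (n : ℕ) : qBinom q n 0 = 1 := by
  rw [qBinom, qFact_zero]
  simp [Nat.sub_zero, div_self (qFact_pos hq0 hq1 n).ne']

include hq0 hq1 in
lemma qBinom_self (n : ℕ) : qBinom q n n = 1 := by
  rw [qBinom, Nat.sub_self, qFact_zero]
  simp [div_self (qFact_pos hq0 hq1 n).ne']

include hq0 hq1 in
lemma qPascal (n k : ℕ) (hk : k + 1 ≤ n) :
    qBinom q (n + 1) (k + 1) = qBinom q n (k + 1) + q ^ (n - k) * qBinom q n k := by
  have h1 : n + 1 - (k + 1) = n - k := by omega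
  have h2 : n - (k + 1) = n - k - 1 := by omega
  have h3 : n - k = (n - k - 1) + 1 := by omega
  have hsum : qInt q ((n + 1 : ℕ) : ℤ) = qInt q ((n - k : ℕ) : ℤ) + q ^ (n - k) * qInt q ((k + 1 : ℕ) : ℤ) := by
    have := qInt_add hq1 (n - k) (k + 1)
    rwa [show n - k + (k + 1) = n + 1 by omega] at this
  rw [qBinom, qBinom, qBinom, h1, h2, qFact_succ n, qFact_succ k, hsum]
  rw [h3, qFact_succ (n - k - 1), ← h3]
  have hFn := (qFact_pos hq0 hq1 n).ne'
  have hFk := (qFact_pos hq0 hq1 k).ne'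
  have hFnk := (qFact_pos hq0 hq1 (n - k - 1)).ne'
  have hIk : qInt q ((k + 1 : ℕ) : ℤ) ≠ 0 := (qInt_pos hq0 hq1 (by omega)).ne'
  have hInk : qInt q ((n - k : ℕ) : ℤ) ≠ 0 := (qInt_pos hq0 hq1 (by omega)).ne'
  set A := qFact q n
  set B := qFact q k
  set C := qFact q (n - k - 1)
  set D := qInt q ((k + 1 : ℕ) : ℤ)
  set E := qInt q ((n - k : ℕ) : ℤ)
  field_simp

lemma bb_eq_sum (n : ℕ) : bb n = ∑ i ∈ range n, i := by
  have := Finset.sum_range_id_mul_two n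
  unfold bb; omega

lemma bb_succ (n : ℕ) : bb (n + 1) = bb n + n := by
  rw [bb_eq_sum, bb_eq_sum, Finset.sum_range_succ]

lemma bb_add (m j : ℕ) : bb (m + j) = bb m + bb j + m * j := by
  rw [bb_eq_sum, bb_eq_sum, bb_eq_sum, Finset.sum_range_add]
  rw [Finset.sum_add_distrib, Finset.sum_const, Finset.card_range]
  ring

lemma oplus_eq_range (α : ℝ) (n : ℕ) : oplus q α n = ∏ i ∈ range n, (1 + α * q ^ i) := by
  rw [oplus, show Finset.Icc 1 n = Finset.Ico 1 (n + 1) by rfl, Finset.prod_Ico_eq_prod_range]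
  simp

include hq0 in
lemma oplus_pos {α : ℝ} (hα : 0 < α) (n : ℕ) : 0 < oplus q α n := by
  refine Finset.prod_pos fun i _ => ?_
  have : 0 < α * q ^ (i - 1) := by positivity
  linarith

lemma oplus_split (α : ℝ) {m N : ℕ} (hm : m ≤ N) :
    oplus q α N = oplus q α m * oplus q (α * q ^ m) (N - m) := by
  rw [oplus_eq_range, oplus_eq_range, oplus_eq_range, ← Nat.add_sub_cancel' hm,
    Finset.prod_range_add, Nat.add_sub_cancel_left]
  congr 1
  refine Finset.prod_congr rfl fun i _ => ?_
  rw [pow_add]; ring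

include hq0 hq1 in
lemma qBT (α : ℝ) (N : ℕ) :
    ∑ y ∈ range (N + 1), qBinom q N y * α ^ y * q ^ bb y = oplus q α N := by
  induction N with
  | zero =>
    simp [oplus, qBinom_self hq0 hq1 0, bb]
  | succ N ih =>
    have hop : oplus q α (N + 1) = oplus q α N * (1 + α * q ^ N) := by
      rw [oplus, Finset.prod_Icc_succ_top (by omega)]
      simp [oplus]
    rw [hop, ← ih]
    set f : ℕ → ℝ := fun y => qBinom q (N+1) y * α ^ y * q ^ bb y with hf
    set g : ℕ → ℝ := fun y => qBinom q N y * α ^ y * q ^ bb y with hg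
    set h : ℕ → ℝ := fun y => q ^ (N - y) * qBinom q N y * α ^ (y+1) * q ^ bb (y+1) with hh
    have key : ∀ y, y ≤ N → g y * (α * q ^ N) = h y := by
      intro y hy
      simp only [hg, hh]
      rw [bb_succ, pow_add (q) (bb y) y, show N = (N - y) + y by omega,
        pow_add q (N - y) y, show (N - y) + y - y = N - y by omega]
      ring
    have hend : f (N + 1) = h N := by
      simp only [hf, hh]
      rw [qBinom_self hq0 hq1, qBinom_self hq0 hq1, Nat.sub_self, pow_zero]
      ring
    have hzero : f 0 = g 0 := by
      simp only [hf, hg, qBinom_zero hq0 hq1]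
    have hmid : ∀ y ∈ range N, f (y + 1) = g (y + 1) + h y := by
      intro y hy
      have hyN : y + 1 ≤ N := Finset.mem_range.mp hy
      simp only [hf, hg, hh]
      rw [qPascal hq0 hq1 N y hyN]
      ring
    calc ∑ y ∈ range (N + 1 + 1), f y
        = ∑ y ∈ range (N + 1), f (y + 1) + f 0 := Finset.sum_range_succ' f (N + 1)
      _ = (∑ y ∈ range N, f (y + 1) + f (N + 1)) + f 0 := by
          rw [Finset.sum_range_succ (fun y => f (y + 1)) N]
      _ = (∑ y ∈ range N, (g (y + 1) + h y) + h N) + g 0 := by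
          rw [Finset.sum_congr rfl hmid, hend, hzero]
      _ = (∑ y ∈ range N, g (y + 1) + g 0) + (∑ y ∈ range N, h y + h N) := by
          rw [Finset.sum_add_distrib]; ring
      _ = ∑ y ∈ range (N + 1), g y + ∑ y ∈ range (N + 1), h y := by
          rw [Finset.sum_range_succ' g N, Finset.sum_range_succ h N]
      _ = ∑ y ∈ range (N + 1), g y + ∑ y ∈ range (N + 1), g y * (α * q ^ N) := by
          congr 1
          refine (Finset.sum_congr rfl fun y hy => ?_).symm
          exact key y (by have := Finset.mem_range.mp hy; omega)
      _ = (∑ y ∈ range (N + 1), g y) * (1 + α * q ^ N) := by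
          rw [← Finset.sum_mul]; ring

-- qFall lemmas
lemma qFall_zero' (u : ℤ) : qFall q u 0 = 1 := by simp [qFall]

lemma qFall_succ (u : ℤ) (m : ℕ) :
    qFall q u (m + 1) = qFall q u m * qInt q (u - m) := by
  rw [qFall, Finset.prod_Icc_succ_top (by omega)]
  have : u - ((m : ℤ) + 1) + 1 = u - m := by ring
  push_cast
  rw [this]
  rfl

lemma qFall_eq_zero {y m : ℕ} (h : y < m) : qFall q (y : ℤ) m = 0 := by
  rw [qFall]
  refine Finset.prod_eq_zero (i := y + 1) (Finset.mem_Icc.mpr ⟨by omega, by omega⟩) ?_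
  have : (y : ℤ) - ((y : ℕ) + 1 : ℕ) + 1 = 0 := by push_cast; ring
  push_cast at this ⊢
  rw [this]
  simp [qInt]

include hq0 hq1 in
lemma qFall_eq {y m : ℕ} (h : m ≤ y) :
    qFall q (y : ℤ) m = qFact q y / qFact q (y - m) := by
  induction m with
  | zero => simp [qFall_zero', div_self (qFact_pos hq0 hq1 y).ne']
  | succ m ih =>
    have hm : m ≤ y := by omega
    have hcast : (y : ℤ) - (m : ℤ) = ((y - m : ℕ) : ℤ) := by push_cast [hm]; ring
    rw [qFall_succ, ih hm, hcast]
    have h3 : y - m = (y - (m + 1)) + 1 := by omega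
    rw [h3, qFact_succ (y - (m + 1)), ← h3]
    have hI : qInt q ((y - m : ℕ) : ℤ) ≠ 0 := (qInt_pos hq0 hq1 (by omega)).ne'
    have hI' : qInt q ((y : ℤ) - (m : ℤ)) ≠ 0 := by rw [hcast]; exact hI
    have hF : qFact q (y - (m + 1)) ≠ 0 := (qFact_pos hq0 hq1 _).ne'
    field_simp

include hq0 hq1 in
lemma keyC {m y N : ℕ} (hmy : m ≤ y) (hyN : y ≤ N) :
    qFall q (y : ℤ) m * qBinom q N y = qFall q (N : ℤ) m * qBinom q (N - m) (y - m) := by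
  rw [qFall_eq hq0 hq1 hmy, qFall_eq hq0 hq1 (hmy.trans hyN), qBinom, qBinom,
    show N - m - (y - m) = N - y by omega]
  have h1 := (qFact_pos hq0 hq1 y).ne'
  have h2 := (qFact_pos hq0 hq1 (y - m)).ne'
  have h3 := (qFact_pos hq0 hq1 N).ne'
  have h4 := (qFact_pos hq0 hq1 (N - m)).ne'
  have h5 := (qFact_pos hq0 hq1 (N - y)).ne'
  field_simp

end Aux

theorem stmt1 (q : ℝ) (hq0 : 0 < q) (hq1 : q < 1) (N : ℕ) (α : ℝ)
    (hα : 0 < α) (hα' : α < 1) (m : ℕ) (hm : m ≤ N) :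
    ∑ y ∈ Finset.range (N + 1),
      qFall q (y : ℤ) m * qBinom q N y * α ^ y * q ^ bb y / oplus q α N
      = qFall q (N : ℤ) m * α ^ m * q ^ bb m / oplus q α m := by
  have hS : ∑ y ∈ Finset.range (N + 1), qFall q (y : ℤ) m * qBinom q N y * α ^ y * q ^ bb y
      = qFall q (N : ℤ) m * α ^ m * q ^ bb m * oplus q (α * q ^ m) (N - m) := by
    rw [Finset.range_eq_Ico, ← Finset.sum_Ico_consecutive _ (Nat.zero_le m) (by omega : m ≤ N + 1)]
    have hlow : ∑ y ∈ Finset.Ico 0 m, qFall q (y : ℤ) m * qBinom q N y * α ^ y * q ^ bb y = 0 := by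
      refine Finset.sum_eq_zero fun y hy => ?_
      have : y < m := (Finset.mem_Ico.mp hy).2
      rw [qFall_eq_zero this]
      ring
    rw [hlow, zero_add, Finset.sum_Ico_eq_sum_range,
      show N + 1 - m = (N - m) + 1 by omega]
    rw [← qBT hq0 hq1 (α * q ^ m) (N - m), Finset.mul_sum]
    refine Finset.sum_congr rfl fun j hj => ?_
    have hjN : j ≤ N - m := by have := Finset.mem_range.mp hj; omega
    have h1 : qFall q ((m + j : ℕ) : ℤ) m * qBinom q N (m + j)
        = qFall q (N : ℤ) m * qBinom q (N - m) j := by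
      have := keyC hq0 hq1 (show m ≤ m + j by omega) (show m + j ≤ N by omega)
      rwa [Nat.add_sub_cancel_left] at this
    push_cast
    rw [show qFall q ((m : ℤ) + (j : ℤ)) m = qFall q ((m + j : ℕ) : ℤ) m by push_cast; ring_nf]
    rw [mul_assoc, mul_assoc, ← mul_assoc (qFall q ((m + j : ℕ) : ℤ) m), h1]
    rw [bb_add, pow_add, pow_add, pow_add, mul_pow, ← pow_mul]
    ring
  rw [← Finset.sum_div, hS, oplus_split α hm]
  have h1 : oplus q (α * q ^ m) (N - m) ≠ 0 := (oplus_pos hq0 (by positivity) _).ne'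
  have h2 : oplus q α m ≠ 0 := (oplus_pos hq0 hα _).ne'
  field_simp
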